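/- Let Γ = (Γ, ≤, μ, (φ_x)_{x∈V(Γ)}) be a trickle graph. Then the map S(Γ) → Tr(Γ) sending the syllable x^a to the element x^a of Tr(Γ) is injective. In particular, V(Γ) embeds into Tr(Γ) (distinct generators represent distinct group elements). -/

import Mathlib

open scoped Classical

universe u

namespace SimpleGraph

/-- `y` belongs to the star of `x` in `G` (i.e. `y = x` or `y` is a neighbour of `x`). -/
def InStar {V : Type u} (G : SimpleGraph V) (x y : V) : Prop := y = x ∨ G.Adj x y

end SimpleGraph

/-- A **trickle graph**: a simplicial graph together with a partial order on the vertices,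
a vertex labeling `mu` with values in `ℕ≥2 ∪ {∞}`, and, for every vertex `x`, an automorphism
`phi x` of the star of `x` (encoded as a permutation of the whole vertex set fixing every
vertex outside of the star of `x`), subject to conditions (a)–(g) of Bellingeri–Chemin–Paris. -/
structure TrickleGraph (V : Type u) [PartialOrder V] where
  /-- the underlying simplicial graph -/
  graph : SimpleGraph V
  /-- the vertex labeling, with `⊤` playing the role of `∞` -/
  mu : V → ℕ∞
  /-- the automorphism of the star of each vertex, extended by the identity -/
  phi : V → Equiv.Perm V
  two_le_mu : ∀ x : V, 2 ≤ mu x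
  /-- condition (a) -/
  adj_of_lt : ∀ x y : V, x < y → graph.Adj x y
  /-- `phi x` is supported on the star of `x` -/
  phi_apply_of_not_inStar : ∀ x y : V, ¬ graph.InStar x y → phi x y = y
  /-- `phi x` maps the star of `x` to itself -/
  inStar_phi : ∀ x y : V, graph.InStar x y → graph.InStar x (phi x y)
  /-- `phi x` is a graph automorphism of the (full subgraph spanned by the) star of `x` -/
  adj_phi_iff : ∀ x y z : V, graph.InStar x y → graph.InStar x z →
      (graph.Adj (phi x y) (phi x z) ↔ graph.Adj y z)
  /-- condition (b) -/
  adj_incomp : ∀ x y z : V, graph.Adj x y → ¬ x ≤ y → ¬ y ≤ x → z ≤ y →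
      graph.Adj x z ∧ ¬ x ≤ z ∧ ¬ z ≤ x
  /-- condition (c) -/
  le_phi_iff : ∀ x y z : V, graph.InStar x y → graph.InStar x z →
      (phi x z ≤ phi x y ↔ z ≤ y)
  /-- condition (d) -/
  lt_of_phi_ne : ∀ x y : V, graph.InStar x y → phi x y ≠ y → y < x
  /-- condition (e): if `mu x` is finite then the order of `phi x` divides `mu x` -/
  phi_pow_mu : ∀ x : V, phi x ^ WithTop.untopD 0 (mu x) = 1
  /-- condition (f) -/
  mu_phi : ∀ x y : V, graph.InStar x y → mu (phi x y) = mu y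
  /-- condition (g) -/
  phi_phi : ∀ x y z : V, z < y → y < x →
      phi x (phi y z) = phi (phi x y) (phi x z)

namespace TrickleGraph

variable {V : Type u} [PartialOrder V]

/-- The set of defining relators of the trickle group: `x ^ (mu x)` whenever `mu x ≠ ∞`, and
`phi_x(y) · x · (phi_y(x) · y)⁻¹` for every edge `{x, y}`. -/
def rels (T : TrickleGraph V) : Set (FreeGroup V) :=
  {r | ∃ (x : V) (n : ℕ), T.mu x = (n : ℕ∞) ∧ r = FreeGroup.of x ^ n} ∪
  {r | ∃ x y : V, T.graph.Adj x y ∧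
      r = FreeGroup.of (T.phi x y) * FreeGroup.of x *
          (FreeGroup.of (T.phi y x) * FreeGroup.of y)⁻¹}

end TrickleGraph

/-- The **trickle group** of a trickle graph. -/
abbrev TrickleGroup {V : Type u} [PartialOrder V] (T : TrickleGraph V) : Type u :=
  PresentedGroup T.rels

namespace TrickleGraph

variable {V : Type u} [PartialOrder V]

/-- The image of a vertex in the trickle group. -/
def gen (T : TrickleGraph V) (x : V) : TrickleGroup T := PresentedGroup.of x

/-- `mu` converted to a natural number, with `∞` mapped to `0` (so that `ZMod (T.muNat x)`
is the group `ℤ_{mu x}` of the paper, `ZMod 0 = ℤ` corresponding to `mu x = ∞`). -/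
def muNat (T : TrickleGraph V) (x : V) : ℕ := WithTop.untopD 0 (T.mu x)

/-- The power `phi_x^a` for an exponent `a ∈ ℤ_{mu x}`; it is well defined on representatives
by condition (e). -/
def phiPow (T : TrickleGraph V) (x : V) (a : ZMod (T.muNat x)) : Equiv.Perm V :=
  T.phi x ^ (ZMod.cast a : ℤ)

theorem mu_phi_apply (T : TrickleGraph V) (x y : V) : T.mu (T.phi x y) = T.mu y := by
  by_cases h : T.graph.InStar x y
  · exact T.mu_phi x y h
  · rw [T.phi_apply_of_not_inStar x y h]

theorem mu_phi_zpow (T : TrickleGraph V) (x : V) :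
    ∀ (n : ℤ) (y : V), T.mu ((T.phi x ^ n) y) = T.mu y := by
  have hinv : ∀ y : V, T.mu ((T.phi x)⁻¹ y) = T.mu y := by
    intro y
    conv_rhs => rw [← show (T.phi x) ((T.phi x)⁻¹ y) = y from Equiv.apply_symm_apply _ _]
    exact (T.mu_phi_apply x ((T.phi x)⁻¹ y)).symm
  intro n
  induction n using Int.induction_on with
  | zero => intro y; simp
  | succ k ih =>
      intro y
      have h : (T.phi x ^ ((k : ℤ) + 1)) y = (T.phi x ^ (k : ℤ)) (T.phi x y) := by
        rw [zpow_add_one]; rfl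
      rw [h, ih (T.phi x y), T.mu_phi_apply]
  | pred k ih =>
      intro y
      have h : (T.phi x ^ (-(k : ℤ) - 1)) y = (T.phi x ^ (-(k : ℤ))) ((T.phi x)⁻¹ y) := by
        rw [zpow_sub_one]; rfl
      rw [h, ih ((T.phi x)⁻¹ y), hinv]

theorem mu_phiPow (T : TrickleGraph V) (x : V) (a : ZMod (T.muNat x)) (y : V) :
    T.mu ((T.phiPow x a) y) = T.mu y :=
  T.mu_phi_zpow x _ y

theorem muNat_phiPow (T : TrickleGraph V) (x : V) (a : ZMod (T.muNat x)) (y : V) :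
    T.muNat ((T.phiPow x a) y) = T.muNat y :=
  congrArg (fun m : ℕ∞ => WithTop.untopD 0 m) (T.mu_phiPow x a y)

end TrickleGraph

/-- Transport of a `ZMod` element along an equality of moduli. -/
def zmodCongr {m k : ℕ} (h : m = k) (a : ZMod m) : ZMod k := by subst h; exact a

theorem zmodCongr_ne_zero {m k : ℕ} (h : m = k) {a : ZMod m} (ha : a ≠ 0) :
    zmodCongr h a ≠ 0 := by subst h; exact ha

/-- A **syllable** `x^a`, where `x` is a vertex and `a ∈ ℤ_{mu x} \ {0}`. -/
def Syllable {V : Type u} [PartialOrder V] (T : TrickleGraph V) : Type u :=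
  Σ x : V, {a : ZMod (T.muNat x) // a ≠ 0}

namespace Syllable

variable {V : Type u} [PartialOrder V] {T : TrickleGraph V}

/-- The element of the trickle group represented by a syllable. -/
def elm (s : Syllable T) : TrickleGroup T :=
  (PresentedGroup.of s.1 : TrickleGroup T) ^ (ZMod.cast s.2.val : ℤ)

end Syllable

/-- Syllabic words. -/
abbrev SylWord {V : Type u} [PartialOrder V] (T : TrickleGraph V) := List (Syllable T)

/-- The element of the trickle group represented by a syllabic word. -/
def SylWord.eval {V : Type u} [PartialOrder V] {T : TrickleGraph V} (w : SylWord T) :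
    TrickleGroup T :=
  (w.map Syllable.elm).prod

/-! ### Auxiliary development: a homomorphism to a semidirect product -/

section AuxDev

variable {V : Type u} [PartialOrder V]

namespace TrickleGraph

variable (T : TrickleGraph V)

theorem phi_fix (x y : V) (h : ¬ y < x) : T.phi x y = y := by
  by_cases hs : T.graph.InStar x y
  · by_contra hne
    exact h (T.lt_of_phi_ne x y hs hne)
  · exact T.phi_apply_of_not_inStar x y hs

theorem phi_self (x : V) : T.phi x x = x := T.phi_fix x x (lt_irrefl x)

theorem muNat_phi (x y : V) : T.muNat (T.phi x y) = T.muNat y :=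
  congrArg (fun m : ℕ∞ => WithTop.untopD 0 m) (T.mu_phi_apply x y)

theorem inStar_of_lt {x y : V} (h : y < x) : T.graph.InStar x y :=
  Or.inr (T.adj_of_lt y x h).symm

theorem inStar_self (x : V) : T.graph.InStar x x := Or.inl rfl

theorem phi_lt_iff (x y z : V) (hy : T.graph.InStar x y) (hz : T.graph.InStar x z) :
    T.phi x z < T.phi x y ↔ z < y := by
  constructor
  · intro h
    rcases lt_iff_le_and_ne.mp h with ⟨h1, h2⟩
    refine lt_iff_le_and_ne.mpr ⟨(T.le_phi_iff x y z hy hz).mp h1, ?_⟩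
    rintro rfl; exact h2 rfl
  · intro h
    rcases lt_iff_le_and_ne.mp h with ⟨h1, h2⟩
    refine lt_iff_le_and_ne.mpr ⟨(T.le_phi_iff x y z hy hz).mpr h1, ?_⟩
    intro he; exact h2 ((T.phi x).injective he)

theorem phi_lt_self {x z : V} (h : z < x) : T.phi x z < x := by
  have := (T.phi_lt_iff x x z (T.inStar_self x) (T.inStar_of_lt h)).mpr h
  rwa [T.phi_self x] at this

/-- Key commutation for comparable adjacent vertices:
`φ_{φ_x(y)} ∘ φ_x = φ_x ∘ φ_y` when `y < x`. -/
theorem comm_perm_lt {x y : V} (hyx : y < x) (z : V) :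
    T.phi (T.phi x y) (T.phi x z) = T.phi x (T.phi y z) := by
  by_cases hzy : z < y
  · exact (T.phi_phi x y z hzy hyx).symm
  · rw [T.phi_fix y z hzy]
    refine T.phi_fix _ _ ?_
    intro hlt
    by_cases hsz : T.graph.InStar x z
    · have := (T.phi_lt_iff x y z (T.inStar_of_lt hyx) hsz).mp hlt
      exact hzy this
    · rw [T.phi_apply_of_not_inStar x z hsz] at hlt
      have hzx : z < x := lt_trans hlt (T.phi_lt_self hyx)
      exact hsz (T.inStar_of_lt hzx)

/-- Key commutation for incomparable adjacent vertices: `φ_x ∘ φ_y = φ_y ∘ φ_x`. -/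
theorem comm_perm_incomp {x y : V} (h : T.graph.Adj x y) (hxy : ¬ x ≤ y) (hyx : ¬ y ≤ x)
    (z : V) : T.phi x (T.phi y z) = T.phi y (T.phi x z) := by
  by_cases hzy : z < y
  · -- here `z < y`, so `¬ z ≤ x` by (b), hence `φ_x z = z`
    have hb := T.adj_incomp x y z h hxy hyx (le_of_lt hzy)
    rw [T.phi_fix x z (fun hc => hb.2.2 (le_of_lt hc))]
    -- need `¬ φ_y z < x`
    have hyz_le : T.phi y z ≤ y := by
      have := (T.le_phi_iff y y z (T.inStar_self y) (T.inStar_of_lt hzy)).mpr (le_of_lt hzy)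
      rwa [T.phi_self y] at this
    have hb2 := T.adj_incomp x y (T.phi y z) h hxy hyx hyz_le
    exact T.phi_fix x (T.phi y z) (fun hc => hb2.2.2 (le_of_lt hc))
  · rw [T.phi_fix y z hzy]
    by_cases hzx : z < x
    · -- `z < x`, `φ_x z ≤ x`, so by (b) (with roles of x, y swapped) `¬ φ_x z ≤ y`
      have hxz_le : T.phi x z ≤ x := le_of_lt (T.phi_lt_self hzx)
      have hb2 := T.adj_incomp y x (T.phi x z) h.symm hyx hxy hxz_le
      exact (T.phi_fix y (T.phi x z) (fun hc => hb2.2.2 (le_of_lt hc))).symm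
    · rw [T.phi_fix x z hzx]
      exact (T.phi_fix y z hzy).symm

theorem muNat_ne_one (x : V) : T.muNat x ≠ 1 := by
  have h2 := T.two_le_mu x
  intro hc
  unfold muNat at hc
  rcases WithTop.untopD_eq_iff.mp hc with h | ⟨_, h⟩
  · rw [h] at h2
    exact absurd (ENat.natCast_le_natCast.mp (h2 : ((2:ℕ):ℕ∞) ≤ ((1:ℕ):ℕ∞))) (by norm_num)
  · exact Nat.one_ne_zero h

end TrickleGraph

/-- The additive group `Π n, ZMod n`; its `n`-th coordinate hosts elements of order dividing
`n` (`ZMod 0 = ℤ` for infinite order). -/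
abbrev TrAux.A : Type := ∀ n : ℕ, ZMod n

/-- The abelian normal subgroup of our target: functions `V → Π n, ZMod n`. -/
abbrev TrAux.N (V : Type u) : Type u := Multiplicative (V → TrAux.A)

namespace TrAux

/-- The permutation action on `N V` by precomposition with the inverse. -/
def permAut (σ : Equiv.Perm V) : MulAut (N V) where
  toFun f := fun v => f (σ⁻¹ v)
  invFun f := fun v => f (σ v)
  left_inv f := funext fun v => by simp
  right_inv f := funext fun v => by simp
  map_mul' f g := rfl

@[simp] theorem permAut_apply (σ : Equiv.Perm V) (f : N V) (v : V) :
    permAut σ f v = f (σ⁻¹ v) := rfl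

/-- `permAut` as a group homomorphism. -/
def permHom : Equiv.Perm V →* MulAut (N V) where
  toFun := permAut
  map_one' := by
    refine MulEquiv.ext fun f => ?_
    funext v
    show f ((1 : Equiv.Perm V)⁻¹ v) = f v
    simp
  map_mul' σ τ := by
    refine MulEquiv.ext fun f => ?_
    funext v
    show f ((σ * τ)⁻¹ v) = f (τ⁻¹ (σ⁻¹ v))
    rw [mul_inv_rev]
    rfl

/-- The target group: a semidirect product `(V → Π n, ZMod n) ⋊ Perm V`. -/
abbrev G (V : Type u) [PartialOrder V] : Type u := N V ⋊[permHom] Equiv.Perm V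

variable {T : TrickleGraph V}

/-- The indicator function of the vertex `x`, concentrated at coordinate `muNat x`. -/
noncomputable def ind (T : TrickleGraph V) (x : V) : V → A :=
  fun v n => if v = x ∧ n = T.muNat x then 1 else 0

theorem permAut_ind (σ : Equiv.Perm V) (x : V) (hσ : T.muNat (σ x) = T.muNat x) :
    permAut σ (Multiplicative.ofAdd (ind T x)) = Multiplicative.ofAdd (ind T (σ x)) := by
  refine congrArg Multiplicative.ofAdd (funext fun v => funext fun n => ?_)
  show ind T x (σ⁻¹ v) n = ind T (σ x) v n
  unfold ind
  rw [hσ]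
  refine if_congr (and_congr_left' ?_) rfl rfl
  exact Equiv.symm_apply_eq σ

/-- The images of the generators in the target group. -/
noncomputable def Fgen (T : TrickleGraph V) (x : V) : G V :=
  ⟨Multiplicative.ofAdd (ind T x), T.phi x⟩

theorem fix_pow {Nn Gg : Type*} [Group Nn] [Group Gg] {φ : Gg →* MulAut Nn}
    {a : Nn} {g : Gg} (h : φ g a = a) (m : ℕ) : φ (g ^ m) a = a := by
  induction m with
  | zero => simp
  | succ l ih => rw [pow_succ, map_mul, MulAut.mul_apply, h, ih]

theorem fix_inv {Nn Gg : Type*} [Group Nn] [Group Gg] {φ : Gg →* MulAut Nn}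
    {a : Nn} {g : Gg} (h : φ g a = a) : φ g⁻¹ a = a := by
  conv_lhs => rw [← h]
  rw [← MulAut.mul_apply, ← map_mul, inv_mul_cancel, map_one, MulAut.one_apply]

theorem mk_pow {Nn Gg : Type*} [Group Nn] [Group Gg] {φ : Gg →* MulAut Nn}
    (a : Nn) (g : Gg) (h : φ g a = a) (k : ℕ) :
    (⟨a, g⟩ : Nn ⋊[φ] Gg) ^ k = ⟨a ^ k, g ^ k⟩ := by
  induction k with
  | zero => rw [pow_zero, pow_zero, pow_zero]; rfl
  | succ m ih =>
      rw [pow_succ, ih, SemidirectProduct.mul_def]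
      show (⟨a ^ m * φ (g ^ m) a, g ^ m * g⟩ : Nn ⋊[φ] Gg) = _
      rw [fix_pow h m, ← pow_succ, ← pow_succ]

theorem mk_zpow {Nn Gg : Type*} [Group Nn] [Group Gg] {φ : Gg →* MulAut Nn}
    (a : Nn) (g : Gg) (h : φ g a = a) (k : ℤ) :
    (⟨a, g⟩ : Nn ⋊[φ] Gg) ^ k = ⟨a ^ k, g ^ k⟩ := by
  cases k with
  | ofNat m =>
      rw [Int.ofNat_eq_coe, zpow_natCast, zpow_natCast, zpow_natCast]
      exact mk_pow a g h m
  | negSucc m =>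
      rw [zpow_negSucc, mk_pow a g h (m + 1), zpow_negSucc, zpow_negSucc]
      ext
      · show φ ((g ^ (m+1))⁻¹) ((a ^ (m+1))⁻¹) = (a ^ (m + 1))⁻¹
        rw [map_inv, map_pow, fix_inv (fix_pow h (m + 1))]
      · rfl

theorem permHom_fix_ind (x : V) :
    permHom (T.phi x) (Multiplicative.ofAdd (ind T x)) = Multiplicative.ofAdd (ind T x) := by
  have h := permAut_ind (T := T) (T.phi x) x (by rw [T.phi_self])
  rw [T.phi_self] at h
  exact h

/-- The defining relators of the trickle group die in the target group. -/
theorem lift_rels (r : FreeGroup V) (hr : r ∈ T.rels) :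
    FreeGroup.lift (Fgen T) r = 1 := by
  rcases hr with ⟨x, n, hmu, rfl⟩ | ⟨x, y, hadj, rfl⟩
  · -- power relator
    have hn : T.muNat x = n := by
      unfold TrickleGraph.muNat; rw [hmu]; exact WithTop.untopD_coe 0 n
    rw [map_pow, FreeGroup.lift_apply_of]
    show (Fgen T x) ^ n = 1
    unfold Fgen
    rw [mk_pow _ _ (permHom_fix_ind x) n]
    have hphi : T.phi x ^ n = 1 := by
      have := T.phi_pow_mu x
      rwa [show WithTop.untopD 0 (T.mu x) = n from hn ▸ rfl] at this
    have hind : (Multiplicative.ofAdd (ind T x)) ^ n = 1 := by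
      have : n • (ind T x) = 0 := by
        funext v m
        show n • (ind T x v m) = 0
        unfold ind
        by_cases hc : v = x ∧ m = T.muNat x
        · rw [if_pos hc]
          rcases hc with ⟨_, rfl⟩
          rw [nsmul_eq_mul, mul_one, hn, ZMod.natCast_self]
        · rw [if_neg hc, smul_zero]
      show Multiplicative.ofAdd (n • (ind T x)) = 1
      rw [this]; rfl
    rw [hind, hphi]; rfl
  · -- edge relator
    rw [map_mul, map_mul, map_inv, map_mul, FreeGroup.lift_apply_of, FreeGroup.lift_apply_of,
      FreeGroup.lift_apply_of, FreeGroup.lift_apply_of]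
    rw [mul_inv_eq_one]
    -- goal : Fgen T (φ_x y) * Fgen T x = Fgen T (φ_y x) * Fgen T y
    -- main case lemma
    have main : ∀ x y : V, y < x →
        Fgen T (T.phi x y) * Fgen T x = Fgen T (T.phi y x) * Fgen T y := by
      intro x y hyx
      have hxfix : T.phi y x = x := T.phi_fix y x (fun hc => lt_asymm hyx hc)
      have hy' : T.phi x y < x := T.phi_lt_self hyx
      have hxfix' : T.phi (T.phi x y) x = x :=
        T.phi_fix (T.phi x y) x (fun hc => lt_asymm hy' hc)
      rw [hxfix]
      unfold Fgen
      rw [SemidirectProduct.mul_def, SemidirectProduct.mul_def]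
      congr 1
      · show Multiplicative.ofAdd (ind T (T.phi x y)) *
            permAut (T.phi (T.phi x y)) (Multiplicative.ofAdd (ind T x)) =
          Multiplicative.ofAdd (ind T x) *
            permAut (T.phi x) (Multiplicative.ofAdd (ind T y))
        rw [permAut_ind (T.phi (T.phi x y)) x (by rw [hxfix']), hxfix',
          permAut_ind (T.phi x) y (T.muNat_phi x y)]
        exact mul_comm _ _
      · refine Equiv.ext fun z => ?_
        show T.phi (T.phi x y) (T.phi x z) = T.phi x (T.phi y z)
        exact T.comm_perm_lt hyx z
    by_cases h1 : y < x
    · exact main x y h1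
    by_cases h2 : x < y
    · have := (main y x h2).symm
      exact this
    · -- incomparable
      have hne : x ≠ y := hadj.ne
      have hxy : ¬ x ≤ y := fun hc => h2 (lt_of_le_of_ne hc hne)
      have hyx : ¬ y ≤ x := fun hc => h1 (lt_of_le_of_ne hc hne.symm)
      have hfy : T.phi x y = y := T.phi_fix x y (fun hc => hyx (le_of_lt hc))
      have hfx : T.phi y x = x := T.phi_fix y x (fun hc => hxy (le_of_lt hc))
      rw [hfy, hfx]
      unfold Fgen
      rw [SemidirectProduct.mul_def, SemidirectProduct.mul_def]
      congr 1
      · show Multiplicative.ofAdd (ind T y) *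
            permAut (T.phi y) (Multiplicative.ofAdd (ind T x)) =
          Multiplicative.ofAdd (ind T x) *
            permAut (T.phi x) (Multiplicative.ofAdd (ind T y))
        rw [permAut_ind (T.phi y) x (T.muNat_phi y x), hfx,
          permAut_ind (T.phi x) y (T.muNat_phi x y), hfy]
        exact mul_comm _ _
      · refine Equiv.ext fun z => ?_
        show T.phi y (T.phi x z) = T.phi x (T.phi y z)
        exact (T.comm_perm_incomp hadj hxy hyx z).symm

/-- The canonical homomorphism from the trickle group to the target group. -/
noncomputable def hHom : TrickleGroup T →* G V :=
  PresentedGroup.toGroup (f := Fgen T) (lift_rels)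

theorem hHom_of (x : V) : hHom (T := T) (PresentedGroup.of x) = Fgen T x :=
  PresentedGroup.toGroup.of _

theorem hHom_syl (x : V) (a : ZMod (T.muNat x)) :
    hHom (T := T) ((PresentedGroup.of x : TrickleGroup T) ^ (ZMod.cast a : ℤ)) =
      ⟨(Multiplicative.ofAdd (ind T x)) ^ (ZMod.cast a : ℤ),
        T.phi x ^ (ZMod.cast a : ℤ)⟩ := by
  rw [map_zpow, hHom_of]
  exact mk_zpow _ _ (permHom_fix_ind x) _

theorem left_syl (x : V) (a : ZMod (T.muNat x)) (v : V) (n : ℕ) :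
    Multiplicative.toAdd
      ((Multiplicative.ofAdd (ind T x)) ^ (ZMod.cast a : ℤ)) v n =
      (ZMod.cast a : ℤ) • (ind T x v n) := by
  rfl

end TrAux

end AuxDev

/-- **Corollary 2.6.** The map from the set of syllables `S(Γ)` to the trickle group `Tr(Γ)`
sending `x^a` to `x^a` is injective; in particular distinct vertices represent distinct
elements of `Tr(Γ)`. -/
theorem Syllable.elm_injective {V : Type u} [PartialOrder V] (T : TrickleGraph V) :
    Function.Injective (Syllable.elm : Syllable T → TrickleGroup T) ∧
    Function.Injective (fun x : V => (PresentedGroup.of x : TrickleGroup T)) := by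
  constructor
  · rintro ⟨x, a, ha⟩ ⟨y, b, hb⟩ h
    have h2 := congrArg (TrAux.hHom (T := T)) h
    rw [show Syllable.elm ⟨x, ⟨a, ha⟩⟩ =
          (PresentedGroup.of x : TrickleGroup T) ^ (ZMod.cast a : ℤ) from rfl,
        show Syllable.elm ⟨y, ⟨b, hb⟩⟩ =
          (PresentedGroup.of y : TrickleGroup T) ^ (ZMod.cast b : ℤ) from rfl,
        TrAux.hHom_syl, TrAux.hHom_syl] at h2
    have hleft := congrArg SemidirectProduct.left h2
    have hfun : ∀ v n, (ZMod.cast a : ℤ) • TrAux.ind T x v n =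
        (ZMod.cast b : ℤ) • TrAux.ind T y v n := by
      intro v n
      have := congrFun (congrFun (congrArg Multiplicative.toAdd hleft) v) n
      exact this
    have hxy : x = y := by
      by_contra hne
      have := hfun x (T.muNat x)
      rw [show TrAux.ind T x x (T.muNat x) = 1 from if_pos ⟨rfl, rfl⟩,
          show TrAux.ind T y x (T.muNat x) = 0 from if_neg (fun hc => hne hc.1)] at this
      rw [smul_zero, zsmul_eq_mul, mul_one, ZMod.intCast_zmod_cast] at this
      exact ha this
    subst hxy
    have hab : a = b := by
      have := hfun x (T.muNat x)
      rw [show TrAux.ind T x x (T.muNat x) = 1 from if_pos ⟨rfl, rfl⟩] at this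
      rw [zsmul_eq_mul, mul_one, zsmul_eq_mul, mul_one, ZMod.intCast_zmod_cast,
        ZMod.intCast_zmod_cast] at this
      exact this
    subst hab
    rfl
  · intro x y h
    have h2 := congrArg (TrAux.hHom (T := T)) h
    rw [TrAux.hHom_of, TrAux.hHom_of] at h2
    have hleft := congrArg SemidirectProduct.left h2
    have hfun : ∀ v n, TrAux.ind T x v n = TrAux.ind T y v n := by
      intro v n
      exact congrFun (congrFun (congrArg Multiplicative.toAdd hleft) v) n
    by_contra hne
    have := hfun x (T.muNat x)
    rw [show TrAux.ind T x x (T.muNat x) = 1 from if_pos ⟨rfl, rfl⟩,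
        show TrAux.ind T y x (T.muNat x) = 0 from if_neg (fun hc => hne hc.1)] at this
    have h1 : ((1 : ℕ) : ZMod (T.muNat x)) = 0 := by exact_mod_cast this
    have := (CharP.cast_eq_zero_iff (ZMod (T.muNat x)) (T.muNat x) 1).mp h1
    exact T.muNat_ne_one x (Nat.dvd_one.mp this)
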